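/- Let t and d be integers such that the polynomial x² − t·x + d is irreducible over ℚ, let R = ℤ[α] = ℤ[X]/(X² − tX + d) with α the image of X, let A be a 2×2 integer matrix satisfying A·A − t·A + d·I = 0, and let C = [[0,1],[−d,t]] be the companion matrix. Suppose M is a 2×2 integer matrix with det(M) ≠ 0 and A·M = M·C. Define β₀ = M₀₀ + M₀₁·α and β₁ = M₁₀ + M₁₁·α in R (where the integer entries of M are mapped into R canonically). Then the ℤ-submodule N of R spanned by {β₀, β₁} is nonzero and is stable under multiplication by every element of R (so that N is a nonzero ideal of R); that is, N ≠ 0 and for all r ∈ R and all z ∈ N one has r·z ∈ N. -/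

import Mathlib

open Polynomial

/-- The order `ℤ[α] = ℤ[X]/(X² − tX + d)` of the quadratic field `ℚ(α)`. -/
def QuadOrder (t d : ℤ) : Type :=
  AdjoinRoot ((X : ℤ[X]) ^ 2 - C t * X + C d)

noncomputable instance (t d : ℤ) : CommRing (QuadOrder t d) :=
  inferInstanceAs (CommRing (AdjoinRoot _))

/-- The root `α`, i.e. the image of `X` in `ℤ[X]/(X² − tX + d)`. -/
noncomputable def quadAlpha (t d : ℤ) : QuadOrder t d :=
  AdjoinRoot.root _

noncomputable abbrev quadPoly (t d : ℤ) : ℤ[X] := (X : ℤ[X]) ^ 2 - C t * X + C d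

lemma quadPoly_degree (t d : ℤ) : (quadPoly t d).degree = 2 := by
  unfold quadPoly; compute_degree!

lemma quadAlpha_sq (t d : ℤ) :
    quadAlpha t d ^ 2 = (t : QuadOrder t d) * quadAlpha t d - (d : QuadOrder t d) := by
  show (AdjoinRoot.root (quadPoly t d)) ^ 2
      = (t : AdjoinRoot (quadPoly t d)) * AdjoinRoot.root (quadPoly t d)
        - (d : AdjoinRoot (quadPoly t d))
  have h := AdjoinRoot.mk_self (f := quadPoly t d)
  rw [map_add, map_sub, map_pow, map_mul, AdjoinRoot.mk_X, AdjoinRoot.mk_C,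
    AdjoinRoot.mk_C] at h
  simp only [algebraMap_int_eq, eq_intCast] at h
  have h' : quadAlpha t d ^ 2 - (t : QuadOrder t d) * quadAlpha t d + (d : QuadOrder t d) = 0 := h
  exact (show quadAlpha t d ^ 2 = (t : QuadOrder t d) * quadAlpha t d - (d : QuadOrder t d) from
    by linear_combination h')

lemma quad_indep (t d a b : ℤ)
    (h : (a : QuadOrder t d) + (b : QuadOrder t d) * quadAlpha t d = 0) : a = 0 ∧ b = 0 := by
  have h2 : AdjoinRoot.mk (quadPoly t d) (C a + C b * X) = 0 := by
    show AdjoinRoot.mk (quadPoly t d) (C a + C b * X) = 0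
    rw [map_add, map_mul, AdjoinRoot.mk_X, AdjoinRoot.mk_C, AdjoinRoot.mk_C]
    simp only [algebraMap_int_eq, eq_intCast]
    exact h
  rw [AdjoinRoot.mk_eq_zero] at h2
  have hz : (C a + C b * X : ℤ[X]) = 0 := by
    refine Polynomial.eq_zero_of_dvd_of_degree_lt h2 ?_
    rw [quadPoly_degree]
    calc (C a + C b * X : ℤ[X]).degree ≤ 1 := by compute_degree
    _ < 2 := by norm_num
  constructor
  · have := congrArg (fun p => Polynomial.coeff p 0) hz
    simpa using this
  · have := congrArg (fun p => Polynomial.coeff p 1) hz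
    simp only [Polynomial.coeff_add, Polynomial.coeff_C, Polynomial.coeff_C_mul,
      Polynomial.coeff_X_one, Polynomial.coeff_zero, mul_one] at this
    simpa using this

/-- if `x² − tx + d` is irreducible over `ℚ`, `A` is an integer matrix
with `A² − tA + dI = 0`, and `M` is an integer matrix of nonzero determinant with
`A·M = M·C` (where `C` is the companion matrix), then, setting `β₀ = M₀₀ + M₀₁·α`
and `β₁ = M₁₀ + M₁₁·α`, the ℤ-submodule of `ℤ[α]` spanned by `β₀, β₁` is nonzero and
stable under multiplication by every element of `ℤ[α]`, i.e. it is a nonzero ideal. -/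
theorem ideal_matrix_gives_ideal (t d : ℤ)
    (hirr : Irreducible ((X : ℚ[X]) ^ 2 - C (t : ℚ) * X + C (d : ℚ)))
    (A : Matrix (Fin 2) (Fin 2) ℤ)
    (hA : A * A - t • A + d • (1 : Matrix (Fin 2) (Fin 2) ℤ) = 0)
    (M : Matrix (Fin 2) (Fin 2) ℤ) (hMdet : M.det ≠ 0)
    (hM : A * M = M * !![0, 1; -d, t]) :
    Submodule.span ℤ ({(M 0 0 : QuadOrder t d) + (M 0 1 : QuadOrder t d) * quadAlpha t d,
        (M 1 0 : QuadOrder t d) + (M 1 1 : QuadOrder t d) * quadAlpha t d} :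
          Set (QuadOrder t d)) ≠ ⊥ ∧
    ∀ r : QuadOrder t d,
      ∀ z ∈ Submodule.span ℤ
          ({(M 0 0 : QuadOrder t d) + (M 0 1 : QuadOrder t d) * quadAlpha t d,
            (M 1 0 : QuadOrder t d) + (M 1 1 : QuadOrder t d) * quadAlpha t d} :
              Set (QuadOrder t d)),
        r * z ∈ Submodule.span ℤ
          ({(M 0 0 : QuadOrder t d) + (M 0 1 : QuadOrder t d) * quadAlpha t d,
            (M 1 0 : QuadOrder t d) + (M 1 1 : QuadOrder t d) * quadAlpha t d} :
              Set (QuadOrder t d)) := by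
  set R := QuadOrder t d
  set α := quadAlpha t d with hαdef
  set β₀ := (M 0 0 : R) + (M 0 1 : R) * α with hβ₀
  set β₁ := (M 1 0 : R) + (M 1 1 : R) * α with hβ₁
  set S := Submodule.span ℤ ({β₀, β₁} : Set R) with hS
  have hβ₀S : β₀ ∈ S := Submodule.subset_span (Set.mem_insert _ _)
  have hβ₁S : β₁ ∈ S := Submodule.subset_span (Set.mem_insert_of_mem _ rfl)
  have hα : α ^ 2 = (t : R) * α - (d : R) := quadAlpha_sq t d
  -- entry equations
  have e00 : A 0 0 * M 0 0 + A 0 1 * M 1 0 = -(d * M 0 1) := by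
    have := congrFun (congrFun hM 0) 0
    simp [Matrix.mul_apply, Fin.sum_univ_two] at this
    linarith
  have e01 : A 0 0 * M 0 1 + A 0 1 * M 1 1 = M 0 0 + t * M 0 1 := by
    have := congrFun (congrFun hM 0) 1
    simp [Matrix.mul_apply, Fin.sum_univ_two] at this
    linarith
  have e10 : A 1 0 * M 0 0 + A 1 1 * M 1 0 = -(d * M 1 1) := by
    have := congrFun (congrFun hM 1) 0
    simp [Matrix.mul_apply, Fin.sum_univ_two] at this
    linarith
  have e11 : A 1 0 * M 0 1 + A 1 1 * M 1 1 = M 1 0 + t * M 1 1 := by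
    have := congrFun (congrFun hM 1) 1
    simp [Matrix.mul_apply, Fin.sum_univ_two] at this
    linarith
  have c00 : (A 0 0 : R) * M 0 0 + (A 0 1 : R) * M 1 0 = -((d : R) * M 0 1) := by
    have := congrArg (Int.cast : ℤ → R) e00
    push_cast [R] at this
    exact this
  have c01 : (A 0 0 : R) * M 0 1 + (A 0 1 : R) * M 1 1 = (M 0 0 : R) + (t : R) * M 0 1 := by
    have := congrArg (Int.cast : ℤ → R) e01
    push_cast [R] at this
    exact this
  have c10 : (A 1 0 : R) * M 0 0 + (A 1 1 : R) * M 1 0 = -((d : R) * M 1 1) := by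
    have := congrArg (Int.cast : ℤ → R) e10
    push_cast [R] at this
    exact this
  have c11 : (A 1 0 : R) * M 0 1 + (A 1 1 : R) * M 1 1 = (M 1 0 : R) + (t : R) * M 1 1 := by
    have := congrArg (Int.cast : ℤ → R) e11
    push_cast [R] at this
    exact this
  have mulα₀ : α * β₀ = (A 0 0 : R) * β₀ + (A 0 1 : R) * β₁ := by
    rw [hβ₀, hβ₁]
    linear_combination (M 0 1 : R) * hα - c00 - α * c01 + (M 0 1 : R) * hα * 0
  have mulα₁ : α * β₁ = (A 1 0 : R) * β₀ + (A 1 1 : R) * β₁ := by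
    rw [hβ₀, hβ₁]
    linear_combination (M 1 1 : R) * hα - c10 - α * c11
  have hstab : ∀ z ∈ S, α * z ∈ S := by
    intro z hz
    induction hz using Submodule.span_induction with
    | mem x hx =>
      rcases hx with rfl | rfl
      · rw [mulα₀, ← zsmul_eq_mul (α := QuadOrder t d) β₀ (A 0 0),
        ← zsmul_eq_mul (α := QuadOrder t d) β₁ (A 0 1)]
        exact S.add_mem (S.smul_mem _ hβ₀S) (S.smul_mem _ hβ₁S)
      · rw [mulα₁, ← zsmul_eq_mul (α := QuadOrder t d) β₀ (A 1 0),
        ← zsmul_eq_mul (α := QuadOrder t d) β₁ (A 1 1)]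
        exact S.add_mem (S.smul_mem _ hβ₀S) (S.smul_mem _ hβ₁S)
    | zero => simpa using S.zero_mem
    | add x y _ _ hx hy => rw [mul_add]; exact S.add_mem hx hy
    | smul c x _ hx => rw [mul_smul_comm]; exact S.smul_mem _ hx
  have hpow : ∀ n : ℕ, ∀ z ∈ S, α ^ n * z ∈ S := by
    intro n
    induction n with
    | zero => intro z hz; simpa using hz
    | succ n ih =>
      intro z hz
      rw [pow_succ, mul_assoc]
      exact ih _ (hstab z hz)
  constructor
  · intro hbot
    rw [hbot, Submodule.mem_bot] at hβ₀S
    obtain ⟨h1, h2⟩ := quad_indep t d _ _ hβ₀S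
    apply hMdet
    rw [Matrix.det_fin_two, h1, h2]
    ring
  · intro r z hz
    obtain ⟨p, rfl⟩ := AdjoinRoot.mk_surjective (g := quadPoly t d) r
    induction p using Polynomial.induction_on' with
    | add p q hp hq =>
      rw [map_add]
      convert S.add_mem hp hq using 1
      exact add_mul (R := QuadOrder t d) _ _ _
    | monomial n a =>
      have hmono : (AdjoinRoot.mk (quadPoly t d)) (Polynomial.monomial n a)
          = (a : AdjoinRoot (quadPoly t d)) * AdjoinRoot.root (quadPoly t d) ^ n := by
        rw [← Polynomial.C_mul_X_pow_eq_monomial, map_mul, map_pow, AdjoinRoot.mk_X,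
          AdjoinRoot.mk_C]
        simp [algebraMap_int_eq, eq_intCast]
      have hmono' : (AdjoinRoot.mk (quadPoly t d)) (Polynomial.monomial n a)
          = (a : R) * α ^ n := hmono
      rw [hmono', mul_assoc, ← zsmul_eq_mul]
      exact S.smul_mem _ (hpow n z hz)
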